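/- Let f : 𝔽₂ⁿ → 𝔽₂, f ≢ 0, have stratified representation f = M₁(M₂(⋯(M_{r-1}(M_r·p_C + 1) + 1)⋯) + 1) + q with layers M₁, …, M_r. If the variable x_j appears in layer M_i with factor (x_j + a_j), then for every x with x_j = a_j and M₁(x) = M₂(x) = ⋯ = M_{i-1}(x) = 1, one has f(x) = q if i is odd and f(x) = q + 1 if i is even. Consequently, all variables in the same layer M_i share the same canalized output value b_i, and the canalized outputs of consecutive layers are distinct: b_i ≠ b_{i+1} for 1 ≤ i < r. -/

import Mathlib

/-- A Boolean function `f` is essential in (depends on) the variable `v` if flipping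
the value of `v` can change the value of `f`. -/
def EssentialIn {V : Type*} [DecidableEq V] (f : (V → ZMod 2) → ZMod 2) (v : V) : Prop :=
  ∃ x, f x ≠ f (Function.update x v (x v + 1))

/-- A Boolean function is canalizing if some variable `v` has an input value `a` that
forces the output value `b`. -/
def IsCanalizing {V : Type*} (f : (V → ZMod 2) → ZMod 2) : Prop :=
  ∃ (v : V) (a b : ZMod 2), ∀ x, x v = a → f x = b

/-- The extended monomial on the variable set `S` with constants `a`,
`M(x) = ∏_{j ∈ S} (x_j + a_j)`. -/
def extMonomial {V : Type*} (S : Finset V) (a : V → ZMod 2) (x : V → ZMod 2) : ZMod 2 :=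
  ∏ j ∈ S, (x j + a j)

/-- The nested form `M₁(M₂(⋯(M_{r-1}(M_r·p + 1) + 1)⋯) + 1)` determined by a list of
layers (variable sets) `L`, constants `a`, and a core polynomial `p`. For `L = []` it
is just `p`. -/
def nestedLayers {V : Type*} (a : V → ZMod 2) (p : (V → ZMod 2) → ZMod 2) :
    List (Finset V) → (V → ZMod 2) → ZMod 2
  | [], x => p x
  | [S], x => extMonomial S a x * p x
  | S :: T :: Ss, x => extMonomial S a x * (nestedLayers a p (T :: Ss) x + 1)

/-- `IsStratification f L a p q` says that
`f = M₁(M₂(⋯(M_{r-1}(M_r·p_C + 1) + 1)⋯) + 1) + q` is a representation of `f` as in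
the He–Macauley stratification theorem: the layers `Mᵢ = ∏_{j ∈ Sᵢ} (x_j + a_j)` are
nonconstant extended monomials in pairwise disjoint variable sets, the core polynomial
`p` is independent of all layer variables and is identically `1` or non-canalizing,
and the exceptional-case conditions hold (if `p ≡ 1` and `r ≠ 1` then `k_r ≥ 2`; if
`p ≡ 1`, `r = 1`, `k₁ = 1` then `q = 0`; and for `r = 0` the representation is
`f = p_C`, i.e. `q = 0`). -/
def IsStratification {V : Type*} [DecidableEq V] (f : (V → ZMod 2) → ZMod 2)
    (L : List (Finset V)) (a : V → ZMod 2) (p : (V → ZMod 2) → ZMod 2) (q : ZMod 2) :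
    Prop :=
  (∀ S ∈ L, S.Nonempty) ∧
  L.Pairwise Disjoint ∧
  (∀ S ∈ L, ∀ v ∈ S, ¬ EssentialIn p v) ∧
  (p = (fun _ => 1) ∨ ¬ IsCanalizing p) ∧
  (p = (fun _ => 1) → L.length ≠ 1 → ∀ S ∈ L.getLast?, 2 ≤ S.card) ∧
  (p = (fun _ => 1) → ∀ S, L = [S] → S.card = 1 → q = 0) ∧
  (L = [] → q = 0) ∧
  f = fun x => nestedLayers a p L x + q

lemma nested_key {V : Type*} (a : V → ZMod 2) (p : (V → ZMod 2) → ZMod 2) :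
    ∀ (L : List (Finset V)) (i : ℕ) (hi : i < L.length) (x : V → ZMod 2),
      extMonomial (L.get ⟨i, hi⟩) a x = 0 →
      (∀ (i' : ℕ) (hi' : i' < L.length), i' < i → extMonomial (L.get ⟨i', hi'⟩) a x = 1) →
      nestedLayers a p L x = if Even i then 0 else 1
  | [], i, hi, _, _, _ => absurd hi (by simp)
  | S :: rest, 0, hi, x, h0, _ => by
      cases rest with
      | nil => simp [nestedLayers, List.get] at h0 ⊢; simp [h0]
      | cons T Ss => simp [nestedLayers, List.get] at h0 ⊢; simp [h0]
  | S :: rest, (k+1), hi, x, h0, hprev => by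
      have hS : extMonomial S a x = 1 := by
        simpa using hprev 0 (by simp) (Nat.succ_pos k)
      have hk : k < rest.length := Nat.lt_of_succ_lt_succ (by simpa using hi)
      have IH := nested_key a p rest k hk x (by simpa using h0)
        (fun i' hi' hlt => by
          simpa using hprev (i'+1) (by simpa using Nat.succ_lt_succ hi')
            (Nat.succ_lt_succ hlt))
      cases rest with
      | nil => exact absurd hk (by simp)
      | cons T Ss =>
          show extMonomial S a x * (nestedLayers a p (T :: Ss) x + 1) = _
          rw [hS, one_mul, IH]
          rcases Nat.even_or_odd k with he | ho
          · simp [he, Nat.even_add_one, Nat.not_even_iff_odd.mpr, Even.add_one he]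
          · have h1 : ¬ Even k := Nat.not_even_iff_odd.mpr ho
            have h2 : Even (k+1) := Nat.even_add_one.mpr h1
            simp [h1, h2]
            decide

/-- **Remark 4.9(b).** If variable `j` appears in layer `Mᵢ` of the
stratified representation of `f` (with factor `(x_j + a_j)`), then for every `x` with
`x_j = a_j` and `M₀(x) = ⋯ = M_{i-1}(x) = 1` one has `f(x) = q` if the layer index `i`
is even and `f(x) = q + 1` if `i` is odd (layers indexed from `0` here; the paper's
1-based "odd"/"even" is swapped accordingly). Consequently all variables of the same
layer share the same canalized output `bᵢ`, and the canalized outputs of consecutive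
layers are distinct. -/
theorem stmt_10 (n : ℕ) (f : (Fin n → ZMod 2) → ZMod 2) (hf : f ≠ fun _ => 0)
    (L : List (Finset (Fin n))) (a : Fin n → ZMod 2)
    (p : (Fin n → ZMod 2) → ZMod 2) (q : ZMod 2)
    (h : IsStratification f L a p q) :
    (∀ (i : ℕ) (hi : i < L.length), ∀ j ∈ L.get ⟨i, hi⟩, ∀ x,
      x j = a j →
      (∀ (i' : ℕ) (hi' : i' < L.length), i' < i → extMonomial (L.get ⟨i', hi'⟩) a x = 1) →
      f x = q + if Even i then 0 else 1) ∧
    ∃ b : ℕ → ZMod 2,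
      (∀ (i : ℕ) (hi : i < L.length), ∀ j ∈ L.get ⟨i, hi⟩, ∀ x,
        x j = a j →
        (∀ (i' : ℕ) (hi' : i' < L.length), i' < i → extMonomial (L.get ⟨i', hi'⟩) a x = 1) →
        f x = b i) ∧
      (∀ i : ℕ, i + 1 < L.length → b i ≠ b (i + 1)) := by
  obtain ⟨-, -, -, -, -, -, -, hfe⟩ := h
  have main : ∀ (i : ℕ) (hi : i < L.length), ∀ j ∈ L.get ⟨i, hi⟩, ∀ x,
      x j = a j →
      (∀ (i' : ℕ) (hi' : i' < L.length), i' < i → extMonomial (L.get ⟨i', hi'⟩) a x = 1) →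
      f x = q + if Even i then 0 else 1 := by
    intro i hi j hj x hx hprev
    have hM : extMonomial (L.get ⟨i, hi⟩) a x = 0 := by
      refine Finset.prod_eq_zero hj ?_
      rw [hx]
      have : a j + a j = 2 * a j := by ring
      rw [this, (by decide : (2 : ZMod 2) = 0), zero_mul]
    rw [hfe]
    simp only
    rw [nested_key a p L i hi x hM hprev]
    ring
  refine ⟨main, ⟨fun i => q + if Even i then 0 else 1, main, ?_⟩⟩
  intro i _
  show q + (if Even i then 0 else 1) ≠ q + (if Even (i+1) then 0 else 1)
  rcases Nat.even_or_odd i with he | ho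
  · have h2 : ¬ Even (i+1) := by simpa [Nat.even_add_one] using he
    rw [if_pos he, if_neg h2, add_zero]
    exact left_ne_add.mpr one_ne_zero
  · have h1 : ¬ Even i := Nat.not_even_iff_odd.mpr ho
    have h2 : Even (i+1) := Nat.even_add_one.mpr h1
    rw [if_neg h1, if_pos h2, add_zero]
    exact (left_ne_add.mpr one_ne_zero).symm
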